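/- Let f : ℝ → ℝ be differentiable at a point t > 0 and let 0 < α ≤ 1. Then the conformable fractional derivative of f at t exists and equals t^{1−α}·f'(t); that is, the limit of (f(t + ε·t^{1−α}) − f(t))/ε as ε → 0 (through nonzero values) exists and equals t^(1−α) · deriv f t, where t^(1−α) denotes the real power Real.rpow t (1−α). -/

import Mathlib

open Filter Topology

theorem conformable_derivative_of_differentiable (f : ℝ → ℝ) (t : ℝ) (ht : 0 < t)
    (α : ℝ) (hα0 : 0 < α) (hα1 : α ≤ 1) (hf : DifferentiableAt ℝ f t) :
    Tendsto (fun ε : ℝ => (f (t + ε * t ^ (1 - α)) - f t) / ε) (𝓝[≠] 0)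
      (𝓝 (t ^ (1 - α) * deriv f t)) := by
  set c : ℝ := t ^ (1 - α)
  have hinner : HasDerivAt (fun ε : ℝ => t + ε * c) c 0 := by
    simpa using ((hasDerivAt_id (0:ℝ)).mul_const c).const_add t
  have hft : HasDerivAt f (deriv f t) ((fun ε : ℝ => t + ε * c) 0) := by
    simpa using hf.hasDerivAt
  have h : HasDerivAt (fun ε : ℝ => f (t + ε * c)) (c * deriv f t) 0 := by
    simpa [mul_comm, Function.comp_def] using hft.comp 0 hinner
  have H := hasDerivAt_iff_tendsto_slope.mp h
  refine H.congr (fun x => ?_)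
  simp [slope_def_field, div_eq_mul_inv, mul_comm]
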